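/- Let (I, 𝓘, μ) and (I', 𝓘', μ') be measurable spaces with finite measures of total masses N = μ(I) > 0 and N' = μ'(I') > 0, and let w be an evolutionary process from μ to μ', i.e. a family of finite measures w_i on I' measurable in i with μ'(B) = ∫_I w_i(B) dμ(i) for all measurable B. Define W(i) := w_i(I'), W̄ := N'/N, U := W/W̄, and for integrable X on I and Y on I' define E[X] := (1/N)∫X dμ, E'[Y] := (1/N')∫Y dμ', ⟨Y⟩_w(i) := (1/W(i))∫Y(i') dw_i(i') (on {W>0}), and Δ_w(X,Y)(i) := ⟨Y⟩_w(i) − X(i). Then the Price equation holds: E'[Y] − E[X] = cov(X,U) + E[Δ_w(X,Y)·U], where cov(X,U) = E[X(U−1)]. -/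

import Mathlib

open MeasureTheory Real Set ENNReal

lemma integral_disint
    {I I' : Type*} [MeasurableSpace I] [MeasurableSpace I']
    (μ : Measure I) (μ' : Measure I')
    (w : I → Measure I') (hwm : Measurable w)
    (hdis : ∀ B : Set I', MeasurableSet B → μ' B = ∫⁻ i, w i B ∂μ)
    (Y : I' → ℝ) (hY : Integrable Y μ') :
    ∫ i, (∫ y, Y y ∂(w i)) ∂μ = ∫ y, Y y ∂μ' := by
  have hbind : μ' = μ.bind w :=
    Measure.ext fun s hs => by rw [Measure.bind_apply hs hwm.aemeasurable]; exact hdis s hs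
  have hl : ∀ g : I' → ℝ≥0∞, Measurable g → ∫⁻ y, g y ∂μ' = ∫⁻ i, ∫⁻ y, g y ∂(w i) ∂μ := by
    intro g hg; rw [hbind]; exact Measure.lintegral_bind hwm.aemeasurable hg.aemeasurable
  -- replace Y by a measurable representative g
  obtain ⟨g, hgsm, hgae⟩ := hY.1
  have hgm : Measurable g := hgsm.measurable
  have hg_int : Integrable g μ' := hY.congr hgae
  -- a.e. i, Y =ᵐ[w i] g
  obtain ⟨t, htsub, htm, ht0⟩ := exists_measurable_superset_of_null (hgae : Y =ᵐ[μ'] g)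
  have hwt : ∀ᵐ i ∂μ, w i t = 0 := by
    have : ∫⁻ i, w i t ∂μ = 0 := by rw [← hdis t htm]; exact ht0
    exact (lintegral_eq_zero_iff ((Measure.measurable_coe htm).comp hwm)).mp this
  have hYg : ∀ᵐ i ∂μ, ∫ y, Y y ∂(w i) = ∫ y, g y ∂(w i) := by
    filter_upwards [hwt] with i hi
    exact integral_congr_ae (measure_mono_null (fun y hy => htsub hy) hi)
  rw [integral_congr_ae hYg, integral_congr_ae hgae]
  -- now work with g
  set gp : I' → ℝ≥0∞ := fun y => ENNReal.ofReal (g y) with hgp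
  set gm : I' → ℝ≥0∞ := fun y => ENNReal.ofReal (-g y) with hgmdef
  have hgpm : Measurable gp := hgm.ennreal_ofReal
  have hgmm : Measurable gm := hgm.neg.ennreal_ofReal
  have hnm : Measurable fun y => (‖g y‖₊ : ℝ≥0∞) := hgm.nnnorm.coe_nnreal_ennreal
  have hfin : ∫⁻ y, (‖g y‖₊ : ℝ≥0∞) ∂μ' < ⊤ := hg_int.2
  have hple : ∀ y, gp y ≤ (‖g y‖₊ : ℝ≥0∞) := fun y => ENNReal.ofReal_le_of_le_toReal (by
    simp [Real.norm_eq_abs, le_abs_self])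
  have hmle : ∀ y, gm y ≤ (‖g y‖₊ : ℝ≥0∞) := fun y => ENNReal.ofReal_le_of_le_toReal (by
    simp [Real.norm_eq_abs, neg_le_abs])
  have hpfin : ∫⁻ y, gp y ∂μ' < ⊤ := lt_of_le_of_lt (lintegral_mono hple) hfin
  have hmfin : ∫⁻ y, gm y ∂μ' < ⊤ := lt_of_le_of_lt (lintegral_mono hmle) hfin
  -- inner lintegrals are measurable in i
  have Hpm : Measurable fun i => ∫⁻ y, gp y ∂(w i) :=
    (Measure.measurable_lintegral hgpm).comp hwm
  have Hmm : Measurable fun i => ∫⁻ y, gm y ∂(w i) :=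
    (Measure.measurable_lintegral hgmm).comp hwm
  have Hnm : Measurable fun i => ∫⁻ y, (‖g y‖₊ : ℝ≥0∞) ∂(w i) :=
    (Measure.measurable_lintegral hnm).comp hwm
  have hpμ : ∫⁻ i, ∫⁻ y, gp y ∂(w i) ∂μ = ∫⁻ y, gp y ∂μ' := (hl gp hgpm).symm
  have hmμ : ∫⁻ i, ∫⁻ y, gm y ∂(w i) ∂μ = ∫⁻ y, gm y ∂μ' := (hl gm hgmm).symm
  have hnμ : ∫⁻ i, ∫⁻ y, (‖g y‖₊ : ℝ≥0∞) ∂(w i) ∂μ = ∫⁻ y, (‖g y‖₊ : ℝ≥0∞) ∂μ' :=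
    (hl _ hnm).symm
  -- a.e. i, g is integrable w.r.t. w i
  have haefin : ∀ᵐ i ∂μ, ∫⁻ y, (‖g y‖₊ : ℝ≥0∞) ∂(w i) < ⊤ :=
    ae_lt_top Hnm (by rw [hnμ]; exact hfin.ne)
  have hint_i : ∀ᵐ i ∂μ, Integrable g (w i) := by
    filter_upwards [haefin] with i hi
    exact ⟨hgsm.aestronglyMeasurable, hi⟩
  have key : ∀ᵐ i ∂μ, (∫ y, g y ∂(w i))
      = (∫⁻ y, gp y ∂(w i)).toReal - (∫⁻ y, gm y ∂(w i)).toReal := by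
    filter_upwards [hint_i] with i hi
    exact integral_eq_lintegral_pos_part_sub_lintegral_neg_part hi
  rw [integral_congr_ae key]
  have hip : Integrable (fun i => (∫⁻ y, gp y ∂(w i)).toReal) μ :=
    integrable_toReal_of_lintegral_ne_top Hpm.aemeasurable (by rw [hpμ]; exact hpfin.ne)
  have him : Integrable (fun i => (∫⁻ y, gm y ∂(w i)).toReal) μ :=
    integrable_toReal_of_lintegral_ne_top Hmm.aemeasurable (by rw [hmμ]; exact hmfin.ne)
  rw [integral_sub hip him,
    integral_toReal Hpm.aemeasurable (ae_lt_top Hpm (by rw [hpμ]; exact hpfin.ne)),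
    integral_toReal Hmm.aemeasurable (ae_lt_top Hmm (by rw [hmμ]; exact hmfin.ne)),
    hpμ, hmμ, integral_eq_lintegral_pos_part_sub_lintegral_neg_part hg_int]

theorem price_equation
    {I I' : Type*} [MeasurableSpace I] [MeasurableSpace I']
    (μ : Measure I) (μ' : Measure I') [IsFiniteMeasure μ] [IsFiniteMeasure μ']
    (hN : 0 < (μ univ).toReal) (hN' : 0 < (μ' univ).toReal)
    (w : I → Measure I') (hwfin : ∀ i, IsFiniteMeasure (w i))
    (hwm : ∀ B : Set I', MeasurableSet B → Measurable fun i => w i B)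
    (hdis : ∀ B : Set I', MeasurableSet B → μ' B = ∫⁻ i, w i B ∂μ)
    (X : I → ℝ) (Y : I' → ℝ) (hX : Integrable X μ) (hY : Integrable Y μ') :
    let N := (μ univ).toReal
    let N' := (μ' univ).toReal
    let W : I → ℝ := fun i => (w i univ).toReal
    let U : I → ℝ := fun i => W i / (N' / N)
    let lavg : I → ℝ := fun i => (∫ y, Y y ∂(w i)) / W i
    Integrable (fun i => X i * U i) μ →
    Integrable (fun i => (lavg i - X i) * U i) μ →
    (∫ y, Y y ∂μ') / N' - (∫ x, X x ∂μ) / N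
      = (∫ x, X x * (U x - 1) ∂μ) / N + (∫ x, (lavg x - X x) * U x ∂μ) / N := by
  intro N N' W U lavg hXU hLU
  have hNne : N ≠ 0 := hN.ne'
  have hN'ne : N' ≠ 0 := hN'.ne'
  have hwmeas : Measurable w := Measure.measurable_of_measurable_coe w hwm
  -- pointwise identity: lavg i * U i = (∫ Y ∂ w i) * (N / N')
  have hpt : ∀ i, lavg i * U i = (∫ y, Y y ∂(w i)) * (N / N') := by
    intro i
    by_cases h : W i = 0
    · have hw0 : w i = 0 := by
        have := hwfin i
        have : w i univ = 0 := by
          simpa [W, ENNReal.toReal_eq_zero_iff, (measure_ne_top (w i) univ)] using h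
        exact Measure.measure_univ_eq_zero.mp this
      simp [lavg, U, h, hw0]
    · simp only [lavg, U]
      field_simp
  -- integral identities
  have h1 : ∫ x, X x * (U x - 1) ∂μ = (∫ x, X x * U x ∂μ) - ∫ x, X x ∂μ := by
    rw [← integral_sub hXU hX]
    congr 1; ext x; ring
  have hlint : Integrable (fun i => lavg i * U i) μ := by
    have : (fun i => lavg i * U i) = fun i => (lavg i - X i) * U i + X i * U i := by
      ext i; ring
    rw [this]; exact hLU.add hXU
  have h2 : ∫ x, lavg x * U x ∂μ = (∫ x, (lavg x - X x) * U x ∂μ) + ∫ x, X x * U x ∂μ := by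
    rw [← integral_add hLU hXU]
    congr 1; ext x; ring
  have h3 : ∫ x, lavg x * U x ∂μ = (∫ y, Y y ∂μ') * (N / N') := by
    calc ∫ x, lavg x * U x ∂μ = ∫ x, (∫ y, Y y ∂(w x)) * (N / N') ∂μ := by
          exact integral_congr_ae (Filter.Eventually.of_forall hpt)
      _ = (∫ x, (∫ y, Y y ∂(w x)) ∂μ) * (N / N') := by rw [integral_mul_const]
      _ = (∫ y, Y y ∂μ') * (N / N') := by
          rw [integral_disint μ μ' w hwmeas hdis Y hY]
  have hsum : ∫ x, (lavg x - X x) * U x ∂μ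
      = (∫ y, Y y ∂μ') * (N / N') - ∫ x, X x * U x ∂μ := by
    have := h2.symm.trans h3; linarith
  rw [h1, hsum]
  field_simp
  ring
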